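/- The pair β_n = q^{n²}/(q²;q)_{2n}, with α_{3m-1} = q^{3m²+m}, α_{3m} = q^{3m²-m}, α_{3m+1} = -q^{3m²+m} - q^{3m²+5m+2}, is a Bailey pair relative to a = q. -/

import Mathlib

open Finset

noncomputable def qPoch (a q : ℂ) (n : ℕ) : ℂ := ∏ i ∈ Finset.range n, (1 - a * q ^ i)

noncomputable def qInf (q : ℂ) : ℂ := ∏' i : ℕ, (1 - q ^ (i + 1))

def zsgn (m : ℤ) : ℤ := if 0 ≤ m then 1 else -1

noncomputable def alphaS8 (q : ℂ) (n : ℕ) : ℂ :=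
  if n % 3 = 0 then q ^ (3 * ((n : ℤ) / 3) ^ 2 - ((n : ℤ) / 3) : ℤ)
  else if n % 3 = 1 then -q ^ (3 * ((n : ℤ) / 3) ^ 2 + ((n : ℤ) / 3) : ℤ) - q ^ (3 * ((n : ℤ) / 3) ^ 2 + 5 * ((n : ℤ) / 3) + 2 : ℤ)
  else q ^ (3 * (((n : ℤ) + 1) / 3) ^ 2 + (((n : ℤ) + 1) / 3) : ℤ)

noncomputable def qb (q : ℂ) : ℕ → ℤ → ℂ
  | 0 => fun k => if k = 0 then 1 else 0
  | (N+1) => fun k => qb q N k + q ^ ((N : ℤ) + 1 - k) * qb q N (k - 1)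

variable {q : ℂ}

lemma qb_succ (N : ℕ) (k : ℤ) :
    qb q (N+1) k = qb q N k + q ^ ((N : ℤ) + 1 - k) * qb q N (k - 1) := rfl

lemma qb_neg : ∀ (N : ℕ) (k : ℤ), k < 0 → qb q N k = 0 := by
  intro N
  induction N with
  | zero => intro k hk; simp [qb]; omega
  | succ N ih =>
    intro k hk
    rw [qb_succ, ih k hk, ih (k-1) (by omega)]
    ring

lemma qb_gt : ∀ (N : ℕ) (k : ℤ), (N : ℤ) < k → qb q N k = 0 := by
  intro N
  induction N with
  | zero => intro k hk; simp [qb]; omega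
  | succ N ih =>
    intro k hk
    push_cast at hk
    rw [qb_succ, ih k (by omega), ih (k-1) (by omega)]
    ring

lemma qb_zero (N : ℕ) : qb q N 0 = 1 := by
  induction N with
  | zero => simp [qb]
  | succ N ih => rw [qb_succ, ih, qb_neg N (0-1) (by omega)]; ring

lemma qb_diag (N : ℕ) : qb q N (N : ℤ) = 1 := by
  induction N with
  | zero => simp [qb]
  | succ N ih =>
    rw [qb_succ]
    push_cast
    rw [qb_gt N ((N:ℤ)+1) (by omega), show (N:ℤ) + 1 - ((N:ℤ)+1) = 0 by ring,
      show (N:ℤ) + 1 - 1 = (N:ℤ) by ring, ih]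
    simp

lemma pascal2 (hq : q ≠ 0) : ∀ (N : ℕ) (k : ℤ),
    qb q (N+1) k = q ^ k * qb q N k + qb q N (k - 1) := by
  intro N
  induction N with
  | zero =>
    intro k
    rcases eq_or_ne k 0 with h | h
    · subst h; simp [qb]
    rcases eq_or_ne k 1 with h1 | h1
    · subst h1; simp [qb]
    · rw [qb_succ]
      simp only [qb, if_neg h, if_neg (by omega : k - 1 ≠ 0)]
      ring
  | succ N ih =>
    intro k
    have A := qb_succ (q := q) (N+1) k
    have B := qb_succ (q := q) N k
    have C := qb_succ (q := q) N (k-1)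
    have D := ih k
    have E := ih (k-1)
    push_cast at A
    have h1 : q ^ ((N:ℤ) + 1 + 1 - k) * q ^ (k-1) = q ^ k * q ^ ((N:ℤ) + 1 - k) := by
      rw [← zpow_add₀ hq, ← zpow_add₀ hq]; congr 1; ring
    have h2 : q ^ ((N:ℤ) + 1 + 1 - k) = q ^ ((N:ℤ) + 1 - (k - 1)) := by congr 1; ring
    linear_combination A + D + q ^ ((N:ℤ) + 1 + 1 - k) * E - q ^ k * B - C
      + qb q N (k-1) * h1 + qb q N (k-1-1) * h2

lemma qb_symm (hq : q ≠ 0) : ∀ (N : ℕ) (k : ℤ), qb q N k = qb q N ((N : ℤ) - k) := by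
  intro N
  induction N with
  | zero =>
    intro k
    have : k = 0 ↔ (0:ℤ) - k = 0 := by omega
    simp only [qb, CharP.cast_eq_zero]
    rcases eq_or_ne k 0 with h|h
    · rw [if_pos h, if_pos (by omega)]
    · rw [if_neg h, if_neg (by omega)]
  | succ N ih =>
    intro k
    have A := qb_succ (q := q) N k
    have D := ih k
    have E := ih (k-1)
    have P := pascal2 hq N ((N:ℤ) + 1 - k)
    have h2 : qb q N ((N:ℤ) - (k-1)) = qb q N ((N:ℤ) + 1 - k) := by congr 1; ring
    have h3 : qb q N ((N:ℤ) + 1 - k - 1) = qb q N ((N:ℤ) - k) := by congr 1; ring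
    have h4 : qb q (N+1) (((N:ℕ)+1 : ℤ) - k) = qb q (N+1) ((N:ℤ) + 1 - k) := by
      push_cast; ring_nf
    push_cast
    rw [h4]
    linear_combination A + D + q ^ ((N:ℤ) + 1 - k) * E + q ^ ((N:ℤ) + 1 - k) * h2 - P - h3

lemma sum_ext (f : ℤ → ℂ) {a b a' b' : ℤ} (ha : a' ≤ a) (hb : b ≤ b')
    (hf : ∀ m, m < a ∨ b < m → f m = 0) :
    ∑ m ∈ Icc a' b', f m = ∑ m ∈ Icc a b, f m := by
  refine (Finset.sum_subset (Finset.Icc_subset_Icc ha hb) ?_).symm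
  intro x hx hnx
  simp only [Finset.mem_Icc] at hx hnx
  exact hf x (by omega)

lemma refl_neg (f : ℤ → ℂ) (M : ℤ) :
    ∑ m ∈ Icc (-M) M, f (-m) = ∑ m ∈ Icc (-M) M, f m := by
  refine Finset.sum_nbij' (fun m => -m) (fun m => -m) ?_ ?_ ?_ ?_ ?_ <;>
    intros <;> simp_all [Finset.mem_Icc] <;> omega

lemma refl_negsucc (f : ℤ → ℂ) (M : ℤ) :
    ∑ m ∈ Icc (-M) M, f (-m-1) = ∑ m ∈ Icc (-M-1) (M-1), f m := by
  refine Finset.sum_nbij' (fun m => -m-1) (fun m => -m-1) ?_ ?_ ?_ ?_ ?_ <;>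
    intros <;> simp_all [Finset.mem_Icc] <;> omega

noncomputable def tO (q : ℂ) (N : ℕ) (t m : ℤ) : ℂ :=
  q ^ (3*m^2 - m) * qb q N (t - 3*m) - q ^ (3*m^2 + m) * qb q N (t - 3*m - 1)

noncomputable def tX (q : ℂ) (N : ℕ) (t m : ℤ) : ℂ :=
  q ^ (3*m^2 + 2*m) * qb q N (t - 3*m) - q ^ (3*m^2 + 4*m + 1) * qb q N (t - 3*m - 1)

lemma tO_vanish (N : ℕ) (t m : ℤ) (h : t < 3*m ∨ 3*m < t - N - 1) : tO q N t m = 0 := by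
  unfold tO
  rcases h with h | h
  · rw [qb_neg N _ (by omega), qb_neg N _ (by omega)]; ring
  · rw [qb_gt N _ (by omega), qb_gt N _ (by omega)]; ring

lemma tX_vanish (N : ℕ) (t m : ℤ) (h : t < 3*m ∨ 3*m < t - N - 1) : tX q N t m = 0 := by
  unfold tX
  rcases h with h | h
  · rw [qb_neg N _ (by omega), qb_neg N _ (by omega)]; ring
  · rw [qb_gt N _ (by omega), qb_gt N _ (by omega)]; ring

lemma qpow_mul (hq : q ≠ 0) {a b c d : ℤ} (h : a + b = c + d) :
    q ^ a * q ^ b = q ^ c * q ^ d := by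
  rw [← zpow_add₀ hq, ← zpow_add₀ hq, h]

lemma chain1 (hq : q ≠ 0) (n : ℕ) (M : ℤ) :
    ∑ m ∈ Icc (-M) M, tO q (2*n+2) ((n:ℤ)+1) m
      = q ^ ((n:ℤ)+1) * ∑ m ∈ Icc (-M) M, tX q (2*n+1) (n:ℤ) m := by
  have point : ∀ m : ℤ, tO q (2*n+2) ((n:ℤ)+1) m
      = (q ^ (3*m^2 - m) * qb q (2*n+1) ((n:ℤ)+1 - 3*m)
          - q ^ (3*m^2 + m) * qb q (2*n+1) ((n:ℤ) - 3*m))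
        + q ^ ((n:ℤ)+1) * tX q (2*n+1) (n:ℤ) m := by
    intro m
    unfold tO tX
    have A := qb_succ (q := q) (2*n+1) ((n:ℤ)+1 - 3*m)
    have B := qb_succ (q := q) (2*n+1) ((n:ℤ)+1 - 3*m - 1)
    push_cast at A B
    have e1 : q ^ (3*m^2 - m) * q ^ ((2*n:ℤ)+1+1 - ((n:ℤ)+1 - 3*m))
        = q ^ ((n:ℤ)+1) * q ^ (3*m^2 + 2*m) := qpow_mul hq (by ring)
    have e2 : q ^ (3*m^2 + m) * q ^ ((2*n:ℤ)+1+1 - ((n:ℤ)+1 - 3*m - 1))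
        = q ^ ((n:ℤ)+1) * q ^ (3*m^2 + 4*m + 1) := qpow_mul hq (by ring)
    have i1 : qb q (2*n+1) ((n:ℤ)+1 - 3*m - 1) = qb q (2*n+1) ((n:ℤ) - 3*m) := by
      congr 1; ring
    have i2 : qb q (2*n+1) ((n:ℤ)+1 - 3*m - 1 - 1) = qb q (2*n+1) ((n:ℤ) - 3*m - 1) := by
      congr 1; ring
    linear_combination q ^ (3*m^2 - m) * A - q ^ (3*m^2 + m) * B
      + qb q (2*n+1) ((n:ℤ)+1 - 3*m - 1) * e1 - qb q (2*n+1) ((n:ℤ)+1-3*m-1-1) * e2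
      + (q ^ (3*m^2 - m) * q ^ ((2*n:ℤ)+1+1 - ((n:ℤ)+1 - 3*m)) - q^(3*m^2+m)) * i1
      - q ^ (3*m^2 + m) * q ^ ((2*n:ℤ)+1+1 - ((n:ℤ)+1 - 3*m - 1)) * i2
      + (qb q (2*n+1) ((n:ℤ) - 3*m) - qb q (2*n+1) ((n:ℤ)+1 - 3*m - 1)) * e1
      + (qb q (2*n+1) ((n:ℤ)+1 - 3*m - 1 - 1) - qb q (2*n+1) ((n:ℤ) - 3*m - 1)) * e2
  rw [Finset.sum_congr rfl (fun m _ => point m), Finset.sum_add_distrib,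
    Finset.sum_sub_distrib, ← Finset.mul_sum]
  have refl : ∑ m ∈ Icc (-M) M, q ^ (3*m^2 - m) * qb q (2*n+1) ((n:ℤ)+1 - 3*m)
      = ∑ m ∈ Icc (-M) M, q ^ (3*m^2 + m) * qb q (2*n+1) ((n:ℤ) - 3*m) := by
    rw [← refl_neg (fun m => q ^ (3*m^2 - m) * qb q (2*n+1) ((n:ℤ)+1 - 3*m)) M]
    refine Finset.sum_congr rfl (fun m _ => ?_)
    have e : q ^ (3*(-m)^2 - (-m)) = q ^ (3*m^2 + m) := by congr 1; ring
    have i : qb q (2*n+1) ((n:ℤ)+1 - 3*(-m)) = qb q (2*n+1) ((n:ℤ) - 3*m) := by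
      rw [qb_symm hq (2*n+1) ((n:ℤ)+1 - 3*(-m))]
      congr 1; push_cast; ring
    rw [e, i]
  rw [refl]
  ring

lemma chain2 (hq : q ≠ 0) (n : ℕ) (M : ℤ) (hM : (n:ℤ) + 2 ≤ M) :
    ∑ m ∈ Icc (-M) M, tX q (2*n+1) (n:ℤ) m
      = q ^ (n:ℤ) * ∑ m ∈ Icc (-M) M, tO q (2*n) (n:ℤ) m := by
  set t2 : ℤ → ℂ := fun m => q ^ (3*m^2 + 2*m) * qb q (2*n) ((n:ℤ) - 3*m - 1) with ht2
  set t4 : ℤ → ℂ := fun m => q ^ (3*m^2 + 4*m + 1) * qb q (2*n) ((n:ℤ) - 3*m - 2) with ht4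
  have point : ∀ m : ℤ, tX q (2*n+1) (n:ℤ) m
      = q ^ (n:ℤ) * tO q (2*n) (n:ℤ) m + (t2 m - t4 m) := by
    intro m
    unfold tO tX
    simp only [ht2, ht4]
    have P2a := pascal2 hq (2*n) ((n:ℤ) - 3*m)
    have P2b := pascal2 hq (2*n) ((n:ℤ) - 3*m - 1)
    have e1 : q ^ (3*m^2 + 2*m) * q ^ ((n:ℤ) - 3*m)
        = q ^ (n:ℤ) * q ^ (3*m^2 - m) := qpow_mul hq (by ring)
    have e2 : q ^ (3*m^2 + 4*m + 1) * q ^ ((n:ℤ) - 3*m - 1)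
        = q ^ (n:ℤ) * q ^ (3*m^2 + m) := qpow_mul hq (by ring)
    have i : qb q (2*n) ((n:ℤ) - 3*m - 1 - 1) = qb q (2*n) ((n:ℤ) - 3*m - 2) := by
      congr 1; ring
    linear_combination q ^ (3*m^2 + 2*m) * P2a - q ^ (3*m^2 + 4*m + 1) * P2b
      + qb q (2*n) ((n:ℤ) - 3*m) * e1 - qb q (2*n) ((n:ℤ) - 3*m - 1) * e2
      - q ^ (3*m^2 + 4*m + 1) * i
  rw [Finset.sum_congr rfl (fun m _ => point m), Finset.sum_add_distrib,
    Finset.sum_sub_distrib, ← Finset.mul_sum]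
  have hvan : ∀ m : ℤ, m < -M ∨ M - 1 < m → t4 m = 0 := by
    intro m hm
    simp only [ht4]
    rcases hm with h | h
    · rw [qb_gt (2*n) ((n:ℤ) - 3*m - 2) (by push_cast; omega)]; ring
    · rw [qb_neg (2*n) _ (by omega)]; ring
  have hpt : ∀ m : ℤ, t4 (-m-1) = t2 m := by
    intro m
    simp only [ht2, ht4]
    have e : q ^ (3*(-m-1)^2 + 4*(-m-1) + 1) = q ^ (3*m^2 + 2*m) := by congr 1; ring
    have i : qb q (2*n) ((n:ℤ) - 3*(-m-1) - 2) = qb q (2*n) ((n:ℤ) - 3*m - 1) := by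
      rw [qb_symm hq (2*n) ((n:ℤ) - 3*(-m-1) - 2)]
      congr 1; push_cast; ring
    rw [e, i]
  have hT : ∑ m ∈ Icc (-M) M, t2 m = ∑ m ∈ Icc (-M) M, t4 m := by
    calc ∑ m ∈ Icc (-M) M, t2 m = ∑ m ∈ Icc (-M) M, t4 (-m-1) :=
          Finset.sum_congr rfl (fun m _ => (hpt m).symm)
      _ = ∑ m ∈ Icc (-M-1) (M-1), t4 m := refl_negsucc t4 M
      _ = ∑ m ∈ Icc (-M-1) M, t4 m :=
          (sum_ext t4 (le_refl _) (by omega) (fun m hm => hvan m (by omega))).symm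
      _ = ∑ m ∈ Icc (-M) M, t4 m :=
          sum_ext t4 (by omega) (le_refl _) (fun m hm => hvan m (by omega))
  rw [hT]
  ring

lemma chain3 (hq : q ≠ 0) (n : ℕ) (M : ℤ) (hM : (n:ℤ) + 2 ≤ M) :
    ∑ m ∈ Icc (-M) M, tO q (2*n+1) (n:ℤ) m = ∑ m ∈ Icc (-M) M, tO q (2*n) (n:ℤ) m := by
  have point : ∀ m : ℤ, tO q (2*n+1) (n:ℤ) m
      = tO q (2*n) (n:ℤ) m + q ^ ((n:ℤ)+1) * tX q (2*n) ((n:ℤ)-1) m := by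
    intro m
    unfold tO tX
    have A := qb_succ (q := q) (2*n) ((n:ℤ) - 3*m)
    have B := qb_succ (q := q) (2*n) ((n:ℤ) - 3*m - 1)
    push_cast at A B
    have e1 : q ^ (3*m^2 - m) * q ^ ((2*n:ℤ)+1 - ((n:ℤ) - 3*m))
        = q ^ ((n:ℤ)+1) * q ^ (3*m^2 + 2*m) := qpow_mul hq (by ring)
    have e2 : q ^ (3*m^2 + m) * q ^ ((2*n:ℤ)+1 - ((n:ℤ) - 3*m - 1))
        = q ^ ((n:ℤ)+1) * q ^ (3*m^2 + 4*m + 1) := qpow_mul hq (by ring)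
    have i1 : qb q (2*n) ((n:ℤ) - 3*m - 1) = qb q (2*n) ((n:ℤ) - 1 - 3*m) := by
      congr 1; ring
    have i2 : qb q (2*n) ((n:ℤ) - 3*m - 1 - 1) = qb q (2*n) ((n:ℤ) - 1 - 3*m - 1) := by
      congr 1; ring
    linear_combination q ^ (3*m^2 - m) * A - q ^ (3*m^2 + m) * B
      + qb q (2*n) ((n:ℤ) - 1 - 3*m) * e1 - qb q (2*n) ((n:ℤ) - 1 - 3*m - 1) * e2
      + q ^ (3*m^2 - m) * q ^ ((2*n:ℤ)+1 - ((n:ℤ) - 3*m)) * i1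
      - q ^ (3*m^2 + m) * q ^ ((2*n:ℤ)+1 - ((n:ℤ) - 3*m - 1)) * i2
  rw [Finset.sum_congr rfl (fun m _ => point m), Finset.sum_add_distrib, ← Finset.mul_sum]
  have hpt : ∀ m : ℤ, tX q (2*n) ((n:ℤ)-1) (-m-1) = - tX q (2*n) ((n:ℤ)-1) m := by
    intro m
    unfold tX
    have e1 : q ^ (3*(-m-1)^2 + 2*(-m-1)) = q ^ (3*m^2 + 4*m + 1) := by congr 1; ring
    have e2 : q ^ (3*(-m-1)^2 + 4*(-m-1) + 1) = q ^ (3*m^2 + 2*m) := by congr 1; ring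
    have i1 : qb q (2*n) ((n:ℤ) - 1 - 3*(-m-1)) = qb q (2*n) ((n:ℤ) - 1 - 3*m - 1) := by
      rw [qb_symm hq (2*n) ((n:ℤ) - 1 - 3*(-m-1))]; congr 1; push_cast; ring
    have i2 : qb q (2*n) ((n:ℤ) - 1 - 3*(-m-1) - 1) = qb q (2*n) ((n:ℤ) - 1 - 3*m) := by
      rw [qb_symm hq (2*n) ((n:ℤ) - 1 - 3*(-m-1) - 1)]; congr 1; push_cast; ring
    rw [e1, e2, i1, i2]
    ring
  have hvan : ∀ m : ℤ, m < -M ∨ M - 1 < m → tX q (2*n) ((n:ℤ)-1) m = 0 := by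
    intro m hm
    exact tX_vanish (2*n) ((n:ℤ)-1) m (by push_cast; omega)
  have hV : ∑ m ∈ Icc (-M) M, tX q (2*n) ((n:ℤ)-1) m = 0 := by
    have h1 : ∑ m ∈ Icc (-M) M, tX q (2*n) ((n:ℤ)-1) m
        = - ∑ m ∈ Icc (-M) M, tX q (2*n) ((n:ℤ)-1) m := by
      calc ∑ m ∈ Icc (-M) M, tX q (2*n) ((n:ℤ)-1) m
          = ∑ m ∈ Icc (-M-1) M, tX q (2*n) ((n:ℤ)-1) m :=
            (sum_ext _ (by omega) (le_refl _) (fun m hm => hvan m (by omega))).symm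
        _ = ∑ m ∈ Icc (-M-1) (M-1), tX q (2*n) ((n:ℤ)-1) m :=
            sum_ext _ (le_refl _) (by omega) (fun m hm => hvan m (by omega))
        _ = ∑ m ∈ Icc (-M) M, tX q (2*n) ((n:ℤ)-1) (-m-1) :=
            (refl_negsucc _ M).symm
        _ = - ∑ m ∈ Icc (-M) M, tX q (2*n) ((n:ℤ)-1) m := by
            rw [← Finset.sum_neg_distrib]
            exact Finset.sum_congr rfl (fun m _ => hpt m)
    have h2 : (2:ℂ) * ∑ m ∈ Icc (-M) M, tX q (2*n) ((n:ℤ)-1) m = 0 := by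
      linear_combination h1
    simpa using h2
  rw [hV]
  ring

lemma E_val (hq : q ≠ 0) : ∀ (n : ℕ) (M : ℤ), (n:ℤ) + 2 ≤ M →
    ∑ m ∈ Icc (-M) M, tO q (2*n) (n:ℤ) m = q ^ ((n:ℤ)^2) := by
  intro n
  induction n with
  | zero =>
    intro M hM
    norm_num
    rw [Finset.sum_eq_single_of_mem 0 (by simp [Finset.mem_Icc]; omega)
      (fun b _ hb => tO_vanish 0 0 b (by omega))]
    unfold tO
    norm_num [qb]
  | succ n ih =>
    intro M hM
    have h2 : 2*(n+1) = 2*n+2 := by ring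
    have hc : ((n+1 : ℕ) : ℤ) = (n:ℤ)+1 := by push_cast; ring
    rw [h2, hc, chain1 hq n M, chain2 hq n M (by omega), ih M (by omega),
      ← zpow_add₀ hq, ← zpow_add₀ hq]
    congr 1
    ring

lemma O_val (hq : q ≠ 0) (n : ℕ) (M : ℤ) (hM : (n:ℤ) + 2 ≤ M) :
    ∑ m ∈ Icc (-M) M, tO q (2*n+1) (n:ℤ) m = q ^ ((n:ℤ)^2) := by
  rw [chain3 hq n M hM, E_val hq n M hM]

lemma al0 (m : ℕ) : alphaS8 q (3*m) = q ^ (3*(m:ℤ)^2 - m) := by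
  unfold alphaS8
  rw [if_pos (by omega : (3*m) % 3 = 0)]
  have h : ((3*m : ℕ) : ℤ) / 3 = (m:ℤ) := by push_cast; omega
  rw [h]

lemma al1 (m : ℕ) : alphaS8 q (3*m+1) = -q ^ (3*(m:ℤ)^2 + m) - q ^ (3*(m:ℤ)^2 + 5*m + 2) := by
  unfold alphaS8
  rw [if_neg (by omega : ¬ (3*m+1) % 3 = 0), if_pos (by omega : (3*m+1) % 3 = 1)]
  have h : ((3*m+1 : ℕ) : ℤ) / 3 = (m:ℤ) := by push_cast; omega
  rw [h]

lemma al2 (m : ℕ) : alphaS8 q (3*m+2) = q ^ (3*((m:ℤ)+1)^2 + ((m:ℤ)+1)) := by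
  unfold alphaS8
  rw [if_neg (by omega : ¬ (3*m+2) % 3 = 0), if_neg (by omega : ¬ (3*m+2) % 3 = 1)]
  have h : (((3*m+2 : ℕ) : ℤ) + 1) / 3 = (m:ℤ)+1 := by push_cast; omega
  rw [h]

lemma sum_triple (f : ℕ → ℂ) (K : ℕ) :
    ∑ r ∈ range (3*K), f r = ∑ m ∈ range K, (f (3*m) + f (3*m+1) + f (3*m+2)) := by
  induction K with
  | zero => simp
  | succ K ih =>
    have h3 : 3*(K+1) = 3*K+1+1+1 := by ring
    rw [h3, Finset.sum_range_succ, Finset.sum_range_succ, Finset.sum_range_succ, ih,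
      Finset.sum_range_succ]
    have e1 : 3*K+1+1 = 3*K+2 := by omega
    rw [e1]
    ring

lemma sum_range_toInt (f : ℤ → ℂ) (K : ℕ) :
    ∑ m ∈ range K, f (m : ℤ) = ∑ m ∈ Icc (0:ℤ) ((K:ℤ)-1), f m := by
  refine Finset.sum_nbij' (fun (m:ℕ) => (m:ℤ)) (fun m => m.toNat) ?_ ?_ ?_ ?_ ?_ <;>
    intros <;> simp_all [Finset.mem_Icc, Finset.mem_range] <;> omega

lemma sum_range_negsucc (f : ℤ → ℂ) (K : ℕ) :
    ∑ m ∈ range K, f (-(m:ℤ)-1) = ∑ m ∈ Icc (-(K:ℤ)) (-1), f m := by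
  refine Finset.sum_nbij' (fun (m:ℕ) => -(m:ℤ)-1) (fun m => (-m-1).toNat) ?_ ?_ ?_ ?_ ?_ <;>
    intros <;> simp_all [Finset.mem_Icc, Finset.mem_range] <;> omega

lemma key (hq : q ≠ 0) (n : ℕ) :
    ∑ r ∈ range (n+1), alphaS8 q r * qb q (2*n+1) ((n:ℤ) - r) = q ^ ((n:ℤ)^2) := by
  set f : ℕ → ℂ := fun r => alphaS8 q r * qb q (2*n+1) ((n:ℤ) - r) with hf
  have ext1 : ∑ r ∈ range (n+1), f r = ∑ r ∈ range (3*(n+1)), f r := by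
    refine Finset.sum_subset (Finset.range_subset_range.2 (by omega)) ?_
    intro x hx hnx
    simp only [Finset.mem_range] at hx hnx
    simp only [hf]
    rw [qb_neg (2*n+1) ((n:ℤ) - x) (by omega)]
    ring
  have group : ∀ m : ℕ, f (3*m) + f (3*m+1) + f (3*m+2)
      = tO q (2*n+1) (n:ℤ) (m:ℤ) + tO q (2*n+1) (n:ℤ) (-(m:ℤ)-1) := by
    intro m
    simp only [hf]
    rw [al0, al1, al2]
    unfold tO
    have c1 : ((3*m : ℕ) : ℤ) = 3*(m:ℤ) := by push_cast; ring
    have c2 : ((3*m+1 : ℕ) : ℤ) = 3*(m:ℤ)+1 := by push_cast; ring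
    have c3 : ((3*m+2 : ℕ) : ℤ) = 3*(m:ℤ)+2 := by push_cast; ring
    rw [c1, c2, c3]
    have e1 : q ^ (3*(-(m:ℤ)-1)^2 - (-(m:ℤ)-1)) = q ^ (3*((m:ℤ)+1)^2 + ((m:ℤ)+1)) := by
      congr 1; ring
    have e2 : q ^ (3*(-(m:ℤ)-1)^2 + (-(m:ℤ)-1)) = q ^ (3*(m:ℤ)^2 + 5*m + 2) := by
      congr 1; ring
    have i1 : qb q (2*n+1) ((n:ℤ) - 3*(-(m:ℤ)-1)) = qb q (2*n+1) ((n:ℤ) - (3*(m:ℤ)+2)) := by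
      rw [qb_symm hq (2*n+1) ((n:ℤ) - 3*(-(m:ℤ)-1))]; congr 1; push_cast; ring
    have i2 : qb q (2*n+1) ((n:ℤ) - 3*(-(m:ℤ)-1) - 1) = qb q (2*n+1) ((n:ℤ) - (3*(m:ℤ)+1)) := by
      rw [qb_symm hq (2*n+1) ((n:ℤ) - 3*(-(m:ℤ)-1) - 1)]; congr 1; push_cast; ring
    have i3 : qb q (2*n+1) ((n:ℤ) - 3*(m:ℤ) - 1) = qb q (2*n+1) ((n:ℤ) - (3*(m:ℤ)+1)) := by
      congr 1; ring
    rw [e1, e2, i1, i2, i3]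
    ring
  set K : ℕ := n+1 with hK
  have hKZ : ((K:ℕ) : ℤ) = (n:ℤ)+1 := by simp [hK]
  have split : ∑ r ∈ range (3*K), f r
      = ∑ m ∈ Icc (-(K:ℤ)) ((K:ℤ)-1), tO q (2*n+1) (n:ℤ) m := by
    rw [sum_triple f K, Finset.sum_congr rfl (fun m _ => group m), Finset.sum_add_distrib,
      sum_range_toInt (fun m => tO q (2*n+1) (n:ℤ) m) K,
      sum_range_negsucc (fun m => tO q (2*n+1) (n:ℤ) m) K]
    rw [← Finset.sum_union (by
      rw [Finset.disjoint_left]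
      intro a ha hb
      simp only [Finset.mem_Icc] at ha hb
      omega)]
    congr 1
    ext x
    simp only [Finset.mem_union, Finset.mem_Icc]
    omega
  have ext2 : ∑ m ∈ Icc (-((n:ℤ)+2)) ((n:ℤ)+2), tO q (2*n+1) (n:ℤ) m
      = ∑ m ∈ Icc (-(K:ℤ)) ((K:ℤ)-1), tO q (2*n+1) (n:ℤ) m := by
    refine sum_ext _ (by omega) (by omega) ?_
    intro m hm
    refine tO_vanish (2*n+1) (n:ℤ) m (by push_cast; omega)
  rw [ext1, split, ← ext2, O_val hq n ((n:ℤ)+2) (by omega)]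

lemma pq_succ (a : ℂ) (k : ℕ) : qPoch a q (k+1) = qPoch a q k * (1 - a * q^k) :=
  Finset.prod_range_succ _ _

lemma one_sub_pow_ne (hq : ‖q‖ < 1) (j : ℕ) (hj : 1 ≤ j) : (1 : ℂ) - q^j ≠ 0 := by
  intro h
  have h1 : q^j = 1 := by linear_combination -h
  have : ‖q^j‖ < 1 := by
    rw [norm_pow]
    calc ‖q‖^j ≤ ‖q‖^1 := pow_le_pow_of_le_one (norm_nonneg q) hq.le hj
    _ = ‖q‖ := pow_one _
    _ < 1 := hq
  rw [h1] at this
  simp at this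

lemma P_ne (hq : ‖q‖ < 1) (k : ℕ) : qPoch q q k ≠ 0 := by
  unfold qPoch
  rw [Finset.prod_ne_zero_iff]
  intro i _
  have : q * q^i = q^(i+1) := by ring
  rw [this]
  exact one_sub_pow_ne hq (i+1) (by omega)

lemma P2_ne (hq : ‖q‖ < 1) (k : ℕ) : qPoch (q^2) q k ≠ 0 := by
  unfold qPoch
  rw [Finset.prod_ne_zero_iff]
  intro i _
  have : q^2 * q^i = q^(i+2) := by ring
  rw [this]
  exact one_sub_pow_ne hq (i+2) (by omega)

lemma P_shift (k : ℕ) : (1 - q) * qPoch (q^2) q k = qPoch q q (k+1) := by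
  induction k with
  | zero => simp [qPoch]
  | succ k ih =>
    rw [pq_succ, pq_succ q (k+1), ← ih]
    have : q * q^(k+1) = q^2 * q^k := by ring
    rw [this]
    ring

lemma qb_poch : ∀ (N : ℕ), ∀ k : ℕ, k ≤ N →
    qb q N (k:ℤ) * (qPoch q q k * qPoch q q (N-k)) = qPoch q q N := by
  intro N
  induction N with
  | zero =>
    intro k hk
    interval_cases k
    simp [qb, qPoch]
  | succ N ih =>
    intro k hk
    rcases Nat.eq_zero_or_pos k with h0 | h0
    · subst h0
      push_cast
      rw [qb_zero]
      simp [qPoch]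
    rcases eq_or_lt_of_le hk with he | hlt
    · subst he
      rw [qb_succ, qb_gt N _ (by push_cast; omega)]
      have hd : ((N:ℤ) + 1 - ((N+1 : ℕ) : ℤ)) = 0 := by push_cast; ring
      have hd2 : ((N+1 : ℕ) : ℤ) - 1 = (N : ℤ) := by push_cast; ring
      rw [hd, hd2, qb_diag]
      simp [qPoch]
    -- 1 ≤ k ≤ N
    obtain ⟨j, rfl⟩ : ∃ j, k = j + 1 := ⟨k - 1, by omega⟩
    have hjN : j + 1 ≤ N := by omega
    have A := qb_succ (q := q) N ((j+1 : ℕ) : ℤ)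
    have hc1 : ((j+1 : ℕ) : ℤ) - 1 = (j : ℤ) := by push_cast; ring
    have hc2 : (N:ℤ) + 1 - ((j+1 : ℕ) : ℤ) = ((N - j : ℕ) : ℤ) := by push_cast; omega
    rw [hc1, hc2, zpow_natCast] at A
    have IH1 := ih (j+1) hjN
    have IH2 := ih j (by omega)
    have F1 : qPoch q q (N - j) = qPoch q q (N - j - 1) * (1 - q^(N-j)) := by
      have h2 := pq_succ (q := q) q (N - j - 1)
      rw [show N - j - 1 + 1 = N - j from by omega] at h2
      rw [show q * q^(N-j-1) = q^(N-j-1+1) from (pow_succ' q (N-j-1)).symm,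
        show N - j - 1 + 1 = N - j from by omega] at h2
      exact h2
    have F2 : qPoch q q (j+1) = qPoch q q j * (1 - q^(j+1)) := by
      rw [pq_succ]
      have : q * q^j = q^(j+1) := by rw [← pow_succ']
      rw [this]
    have F3 : qPoch q q (N+1) = qPoch q q N * (1 - q^(N+1)) := by
      rw [pq_succ]
      have : q * q^N = q^(N+1) := by rw [← pow_succ']
      rw [this]
    have F4 : q^(N-j) * q^(j+1) = q^(N+1) := by
      rw [← pow_add]
      congr 1
      omega
    have hNj : N + 1 - (j+1) = N - j := by omega
    rw [hNj, A, F3, F1, F2]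
    have hIH1' : qb q N ((j+1 : ℕ) : ℤ) * (qPoch q q (j+1) * qPoch q q (N-j-1)) = qPoch q q N := by
      have : N - (j+1) = N - j - 1 := by omega
      rw [← this]
      exact IH1
    rw [F2] at hIH1'
    linear_combination (1 - q^(N-j)) * hIH1' + q^(N-j) * (1 - q^(j+1)) * IH2
      - q^(N-j) * (1 - q^(j+1)) * qb q N (j:ℤ) * qPoch q q j * F1 - qPoch q q N * F4

lemma alphaS8_zero_big (r : ℕ) (hr : 2 ≤ r) : alphaS8 (0:ℂ) r = 0 := by
  unfold alphaS8
  split_ifs with h1 h2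
  · apply zero_zpow
    have hd : 1 ≤ (r:ℤ)/3 := by omega
    nlinarith [sq_nonneg ((r:ℤ)/3)]
  · have hd : 1 ≤ (r:ℤ)/3 := by omega
    rw [zero_zpow _ (by nlinarith [sq_nonneg ((r:ℤ)/3)]),
      zero_zpow _ (by nlinarith [sq_nonneg ((r:ℤ)/3)])]
    ring
  · apply zero_zpow
    have hd : 1 ≤ ((r:ℤ)+1)/3 := by omega
    nlinarith [sq_nonneg (((r:ℤ)+1)/3)]

theorem stmt8 (q : ℂ) (hq : ‖q‖ < 1) (n : ℕ) :
    q ^ (n ^ 2) / qPoch (q ^ 2) q (2 * n)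
      = ∑ r ∈ Finset.range (n + 1), alphaS8 q r / (qPoch q q (n - r) * qPoch (q ^ 2) q (n + r)) := by
  rcases eq_or_ne q 0 with rfl | hq0
  · -- q = 0 case
    have hP : ∀ (a : ℂ) (k : ℕ), qPoch a 0 k = 1 ∨ qPoch a 0 k = 1 - a := by
      intro a k
      rcases k with _ | k
      · left; simp [qPoch]
      · right
        unfold qPoch
        rw [Finset.prod_eq_single 0 (fun b _ hb => by
            rw [zero_pow hb]; ring) (by simp)]
        simp
    have hP1 : ∀ k : ℕ, qPoch ((0:ℂ)^2) 0 k = 1 := by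
      intro k
      rcases hP ((0:ℂ)^2) k with h | h
      · exact h
      · rw [h]; norm_num
    have hPq : ∀ k : ℕ, qPoch (0:ℂ) 0 k = 1 := by
      intro k
      rcases hP (0:ℂ) k with h | h
      · exact h
      · rw [h]; norm_num
    have ha0 : alphaS8 (0:ℂ) 0 = 1 := by unfold alphaS8; norm_num
    have ha1 : alphaS8 (0:ℂ) 1 = -1 := by
      unfold alphaS8
      norm_num [zero_zpow]
    simp only [hP1, hPq, one_mul, div_one]
    rcases Nat.eq_zero_or_pos n with rfl | hn
    · simp [ha0]
    · have hs : ∀ N : ℕ, 1 ≤ N → ∑ r ∈ Finset.range (N + 1), alphaS8 (0:ℂ) r = 0 := by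
        intro N
        induction N with
        | zero => omega
        | succ N ih =>
          intro _
          rcases Nat.eq_zero_or_pos N with rfl | hN
          · rw [Finset.sum_range_succ, Finset.sum_range_succ, Finset.sum_range_zero, ha0, ha1]
            ring
          · rw [Finset.sum_range_succ, ih hN, alphaS8_zero_big (N+1) (by omega)]
            ring
      rw [hs n hn, zero_pow (by positivity)]
  · -- main case
    have h1q : (1:ℂ) - q ≠ 0 := by
      have := one_sub_pow_ne hq 1 (le_refl 1)
      simpa using this
    have hterm : ∀ r ∈ Finset.range (n+1),
        alphaS8 q r / (qPoch q q (n - r) * qPoch (q^2) q (n + r))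
        = (1 - q) / qPoch q q (2*n+1) * (alphaS8 q r * qb q (2*n+1) ((n:ℤ) - r)) := by
      intro r hr
      simp only [Finset.mem_range] at hr
      have hqb := qb_poch (q := q) (2*n+1) (n-r) (by omega)
      have hcast : (((n - r : ℕ)):ℤ) = (n:ℤ) - r := by omega
      have hNk : 2*n+1 - (n-r) = n+r+1 := by omega
      rw [hcast, hNk] at hqb
      have hsh := P_shift (q := q) (n+r)
      rw [div_mul_eq_mul_div, div_eq_div_iff (mul_ne_zero (P_ne hq _) (P2_ne hq _))
        (P_ne hq (2*n+1))]
      linear_combination (-(alphaS8 q r)) * hqb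
        - alphaS8 q r * qb q (2*n+1) ((n:ℤ)-r) * qPoch q q (n-r) * hsh
    rw [Finset.sum_congr rfl hterm, ← Finset.mul_sum, key hq0 n]
    have hzp : q ^ ((n:ℤ)^2) = q ^ (n^2 : ℕ) := by
      rw [show ((n:ℤ)^2) = ((n^2 : ℕ) : ℤ) by push_cast; ring, zpow_natCast]
    have hsh2 := P_shift (q := q) (2*n)
    rw [hzp, div_mul_eq_mul_div, div_eq_div_iff (P2_ne hq _) (P_ne hq _)]
    linear_combination (-(q^(n^2))) * hsh2
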